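/- arXiv:1407.4235 — 2 statements merged into one kernel-verified Lean document; each statement's English description precedes it below -/
import Mathlib

section
/- Let G be a finite simple graph with list assignment L, and let v be a vertex of G whose list is a singleton, L(v) = {c}. Let G′ be the subgraph of G induced on V(G) \ {v}, and define a list assignment L′ on G′ by L′(u) = L(u) \ {c} for every neighbor u of v in G and L′(u) = L(u) for every other vertex u. Then two proper L-colorings f_0 and f_r of G are reconfigurable in (G, L) if and only if their restrictions to V(G) \ {v} are reconfigurable in (G′, L′). -/
/-- A proper `L`-coloring of `G`: each vertex gets a color from its list, and adjacent
vertices get different colors. -/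
def IsProperListColoring {V α : Type*} (G : SimpleGraph V) (L : V → Finset α)
    (f : V → α) : Prop :=
  (∀ v, f v ∈ L v) ∧ ∀ ⦃u w⦄, G.Adj u w → f u ≠ f w

/-- Two proper `L`-colorings of `G` are adjacent (one recoloring step apart) if they
differ on exactly one vertex. -/
def RecolorStep {V α : Type*} (G : SimpleGraph V) (L : V → Finset α)
    (f g : V → α) : Prop :=
  IsProperListColoring G L f ∧ IsProperListColoring G L g ∧ ∃! w, f w ≠ g w

/-- `f` and `g` are reconfigurable in `(G, L)` if there is a recoloring sequence between
them, i.e. a sequence of proper `L`-colorings starting at `f` and ending at `g` in which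
consecutive colorings are adjacent. -/
def Reconfigurable {V α : Type*} (G : SimpleGraph V) (L : V → Finset α)
    (f g : V → α) : Prop :=
  Relation.ReflTransGen (RecolorStep G L) f g

section Aux

set_option linter.unusedSectionVars false
variable {V α : Type*} [DecidableEq V] [DecidableEq α]
  {G : SimpleGraph V} [DecidableRel G.Adj] {L : V → Finset α} {v : V} {c : α}

/-- extend a coloring of the complement of `{v}` by `c` at `v`. -/
def extCol (v : V) (c : α) (g : ({v}ᶜ : Set V) → α) (w : V) : α :=
  if h : w = v then c else g ⟨w, h⟩

lemma extCol_val (g : ({v}ᶜ : Set V) → α) (u : ({v}ᶜ : Set V)) :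
    extCol v c g u.1 = g u := by
  have : (u.1 : V) ≠ v := u.2
  simp [extCol, this]

lemma color_at_v (hLv : L v = {c}) {f : V → α}
    (hf : IsProperListColoring G L f) : f v = c := by
  have := hf.1 v
  rw [hLv, Finset.mem_singleton] at this
  exact this

lemma restrict_proper (hLv : L v = {c}) {f : V → α}
    (hf : IsProperListColoring G L f) :
    IsProperListColoring (G.induce ({v}ᶜ : Set V))
      (fun u => if G.Adj v u.1 then L u.1 \ {c} else L u.1)
      (fun u => f u.1) := by
  constructor
  · intro u
    by_cases h : G.Adj v u.1
    · simp only [h, if_true, Finset.mem_sdiff, Finset.mem_singleton]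
      refine ⟨hf.1 u.1, ?_⟩
      have := hf.2 h.symm
      rw [color_at_v hLv hf] at this
      exact this
    · simpa [h] using hf.1 u.1
  · intro u w h
    exact hf.2 h

lemma ext_proper (hLv : L v = {c}) {g : ({v}ᶜ : Set V) → α}
    (hg : IsProperListColoring (G.induce ({v}ᶜ : Set V))
      (fun u => if G.Adj v u.1 then L u.1 \ {c} else L u.1) g) :
    IsProperListColoring G L (extCol v c g) := by
  have key : ∀ u : ({v}ᶜ : Set V), G.Adj v u.1 → g u ≠ c := by
    intro u hadj
    have := hg.1 u
    simp only [hadj, if_true, Finset.mem_sdiff, Finset.mem_singleton] at this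
    exact this.2
  constructor
  · intro w
    by_cases h : w = v
    · subst h; simp [extCol, hLv]
    · have := hg.1 ⟨w, h⟩
      simp only [extCol, h, dif_neg, not_false_iff]
      by_cases h2 : G.Adj v w
      · simp only [h2, if_true, Finset.mem_sdiff] at this
        exact this.1
      · simpa [h2] using this
  · intro u w h
    by_cases hu : u = v
    · have hw : w ≠ v := by intro e; rw [hu, e] at h; exact G.loopless.irrefl v h
      rw [show extCol v c g u = c by simp [extCol, hu],
        show extCol v c g w = g ⟨w, hw⟩ by simp [extCol, hw]]
      exact fun e => key ⟨w, hw⟩ (hu ▸ h) e.symm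
    · by_cases hw : w = v
      · rw [show extCol v c g w = c by simp [extCol, hw],
          show extCol v c g u = g ⟨u, hu⟩ by simp [extCol, hu]]
        exact key ⟨u, hu⟩ (hw ▸ h.symm)
      · simp only [extCol, dif_neg hu, dif_neg hw]
        exact hg.2 (u := ⟨u, hu⟩) (w := ⟨w, hw⟩) h

lemma ext_restrict (hLv : L v = {c}) {f : V → α}
    (hf : IsProperListColoring G L f) :
    extCol v c (fun u : ({v}ᶜ : Set V) => f u.1) = f := by
  funext w
  by_cases h : w = v
  · subst h; simp [extCol, color_at_v hLv hf]
  · simp [extCol, h]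

end Aux

/-- Deleting a vertex `v` whose list is a singleton `{c}`, and removing `c` from the lists
of its neighbors, does not affect reconfigurability. -/
theorem reconfigurable_iff_delete_singleton_list_vertex
    {V α : Type*} [Fintype V] [DecidableEq V] [DecidableEq α]
    (G : SimpleGraph V) [DecidableRel G.Adj] (L : V → Finset α)
    (v : V) (c : α) (hLv : L v = {c})
    (f₀ fr : V → α)
    (h₀ : IsProperListColoring G L f₀) (hr : IsProperListColoring G L fr) :
    Reconfigurable G L f₀ fr ↔
      Reconfigurable (G.induce ({v}ᶜ : Set V))
        (fun u => if G.Adj v u.1 then L u.1 \ {c} else L u.1)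
        (fun u => f₀ u.1) (fun u => fr u.1) := by
  set L' : ({v}ᶜ : Set V) → Finset α :=
    fun u => if G.Adj v u.1 then L u.1 \ {c} else L u.1 with hL'
  constructor
  · intro h
    refine Relation.ReflTransGen.lift (fun (f : V → α) (u : ({v}ᶜ : Set V)) => f u.1) ?_ _ _ h
    rintro f g ⟨hf, hg, w, hw, huniq⟩
    unfold Function.onFun
    refine ⟨restrict_proper hLv hf, restrict_proper hLv hg, ?_⟩
    have hwv : w ≠ v := by
      intro e; subst e
      exact hw (by rw [color_at_v hLv hf, color_at_v hLv hg])
    refine ⟨⟨w, hwv⟩, hw, ?_⟩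
    rintro ⟨u, hu⟩ hne
    exact Subtype.ext (huniq u hne)
  · intro h
    have key : Relation.ReflTransGen (RecolorStep G L)
        (extCol v c (fun u : ({v}ᶜ : Set V) => f₀ u.1))
        (extCol v c (fun u : ({v}ᶜ : Set V) => fr u.1)) := by
      refine Relation.ReflTransGen.lift (extCol v c) ?_ _ _ h
      rintro p q ⟨hp, hq, w, hw, huniq⟩
      unfold Function.onFun
      refine ⟨ext_proper hLv hp, ext_proper hLv hq, ?_⟩
      refine ⟨w.1, ?_, ?_⟩
      · show extCol v c p w.1 ≠ extCol v c q w.1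
        rw [extCol_val, extCol_val]; exact hw
      · intro u hne
        have hu : u ≠ v := by
          intro e; subst e
          exact hne (by simp [extCol])
        have : p ⟨u, hu⟩ ≠ q ⟨u, hu⟩ := by
          simpa [extCol, hu] using hne
        exact congrArg Subtype.val (huniq ⟨u, hu⟩ this)
    rwa [ext_restrict hLv h₀, ext_restrict hLv hr] at key
end

section
/- Let G be a finite simple graph with list assignment L, let v be a vertex of G with |L(v)| ≥ deg(v) + 2, let f be a proper L-coloring of G, let u be a neighbor of v, and let c′ ∈ L(u) be a color such that f(x) ≠ c′ for every neighbor x of u with x ≠ v. Then there exists a proper L-coloring g of G with g(u) = c′ and g(x) = f(x) for every vertex x ∉ {u, v}, such that g can be reached from f by a recoloring sequence of at most two recoloring steps. -/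
lemma update_proper_aux {V α : Type*} [DecidableEq V] (G : SimpleGraph V) (L : V → Finset α)
    {f : V → α} (hf : (∀ v, f v ∈ L v) ∧ ∀ ⦃u w⦄, G.Adj u w → f u ≠ f w)
    {w : V} {b : α} (hb : b ∈ L w)
    (hnb : ∀ x, G.Adj w x → f x ≠ b) :
    (∀ v, Function.update f w b v ∈ L v) ∧
      ∀ ⦃x y⦄, G.Adj x y → Function.update f w b x ≠ Function.update f w b y := by
  constructor
  · intro x
    rcases eq_or_ne x w with rfl | hx
    · simpa using hb
    · simpa [Function.update_of_ne hx] using hf.1 x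
  · intro x y hxy
    rcases eq_or_ne x w with rfl | hx
    · have hy : y ≠ x := (G.ne_of_adj hxy).symm
      simp only [Function.update_self, Function.update_of_ne hy]
      exact fun h => hnb y hxy h.symm
    · rcases eq_or_ne y w with rfl | hy
      · simp only [Function.update_of_ne hx, Function.update_self]
        exact fun h => hnb x hxy.symm h
      · simpa [Function.update_of_ne hx, Function.update_of_ne hy] using hf.2 hxy


/-- If `v` has a list of size at least `deg(v) + 2` and `u` is a neighbor of `v` such that
the color `c' ∈ L(u)` is not used by any neighbor of `u` other than `v`, then `u` can be
recolored to `c'` (changing only the colors of `u` and possibly `v`) in at most two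
recoloring steps. -/
theorem recolor_neighbor_of_large_list_vertex
    {V α : Type*} [Fintype V] [DecidableEq α]
    (G : SimpleGraph V) [DecidableRel G.Adj] (L : V → Finset α)
    (v : V) (hLv : G.degree v + 2 ≤ (L v).card)
    (f : V → α) (hf : IsProperListColoring G L f)
    (u : V) (huv : G.Adj v u) (c' : α) (hc' : c' ∈ L u)
    (hnbr : ∀ x : V, G.Adj u x → x ≠ v → f x ≠ c') :
    ∃ g : V → α, IsProperListColoring G L g ∧ g u = c' ∧
      (∀ x : V, x ≠ u → x ≠ v → g x = f x) ∧
      (g = f ∨ RecolorStep G L f g ∨ ∃ h : V → α, RecolorStep G L f h ∧ RecolorStep G L h g) := by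
  classical
  by_cases hfu : f u = c'
  · exact ⟨f, hf, hfu, fun x _ _ => rfl, Or.inl rfl⟩
  by_cases hfv : f v = c'
  · -- two steps: first recolor v, then u
    set S : Finset α := (G.neighborFinset v).image f ∪ {c'} with hS
    have hcard : S.card < (L v).card := by
      have h1 : S.card ≤ ((G.neighborFinset v).image f).card + 1 := by
        simpa [hS] using Finset.card_union_le ((G.neighborFinset v).image f) {c'}
      have h2 : ((G.neighborFinset v).image f).card ≤ G.degree v := by
        simpa [SimpleGraph.card_neighborFinset_eq_degree] using
          Finset.card_image_le (s := G.neighborFinset v) (f := f)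
      omega
    have hne : (L v \ S).Nonempty := by
      rw [← Finset.card_pos]
      have := Finset.card_le_card_sdiff_add_card (s := L v) (t := S)
      omega
    obtain ⟨a, ha⟩ := hne
    obtain ⟨haL, haS⟩ := Finset.mem_sdiff.mp ha
    have hac' : a ≠ c' := by
      intro h; exact haS (by simp [hS, h])
    have hanbr : ∀ x, G.Adj v x → f x ≠ a := by
      intro x hx h
      exact haS (by simp [hS]; exact Or.inr ⟨x, by simpa using hx, h⟩)
    set h1 : V → α := Function.update f v a with hh1
    have hh1prop : IsProperListColoring G L h1 :=
      update_proper_aux G L hf haL hanbr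
    have hvu : v ≠ u := G.ne_of_adj huv
    have huvne : u ≠ v := hvu.symm
    have hh1u : h1 u = f u := Function.update_of_ne huvne _ _
    have hh1nbr : ∀ x, G.Adj u x → h1 x ≠ c' := by
      intro x hx
      rcases eq_or_ne x v with rfl | hxv
      · simpa [hh1] using hac'
      · rw [hh1, Function.update_of_ne hxv]
        exact hnbr x hx hxv
    set g : V → α := Function.update h1 u c' with hg
    have hgprop : IsProperListColoring G L g :=
      update_proper_aux G L hh1prop hc' hh1nbr
    refine ⟨g, hgprop, by simp [hg], ?_, Or.inr (Or.inr ⟨h1, ?_, ?_⟩)⟩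
    · intro x hxu hxv
      simp [hg, hh1, Function.update_of_ne hxu, Function.update_of_ne hxv]
    · refine ⟨hf, hh1prop, v, ?_, ?_⟩
      · simp only [hh1, Function.update_self]
        intro h; exact hac' (h ▸ hfv)
      · intro y hy
        by_contra hyv
        exact hy (by rw [hh1, Function.update_of_ne hyv])
    · refine ⟨hh1prop, hgprop, u, ?_, ?_⟩
      · simp only [hg, Function.update_self, hh1u]
        exact hfu
      · intro y hy
        by_contra hyu
        exact hy (by rw [hg, Function.update_of_ne hyu])
  · -- one step: recolor u directly
    have hnbr' : ∀ x, G.Adj u x → f x ≠ c' := by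
      intro x hx
      rcases eq_or_ne x v with rfl | hxv
      · exact hfv
      · exact hnbr x hx hxv
    set g : V → α := Function.update f u c' with hg
    have hgprop : IsProperListColoring G L g :=
      update_proper_aux G L hf hc' hnbr'
    refine ⟨g, hgprop, by simp [hg], ?_, Or.inr (Or.inl ⟨hf, hgprop, u, ?_, ?_⟩)⟩
    · intro x hxu _
      simp [hg, Function.update_of_ne hxu]
    · simpa [hg] using hfu
    · intro y hy
      by_contra hyu
      exact hy (by rw [hg, Function.update_of_ne hyu])
end
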